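/- Let (K,|·|) be a normed field, f ∈ K[z] a polynomial of degree n ≥ 2 which splits over K, ξ ∈ Kⁿ a root-vector of f, and 1 ≤ p ≤ ∞ with conjugate exponent q. Suppose x ∈ Kⁿ has pairwise distinct components and ψ(E(x)) > 0, where E(x) = ‖(x − ξ)/d(x)‖_p, ψ(t) = 1 − 2^{1/q} t (1 + t/(n−1)^{1/p})^{n−1}. Then f has only simple zeros in K (ξ has pairwise distinct components), Tx has pairwise distinct components, E(Tx) ≤ E(x)·β(E(x))/ψ(E(x)), and |T_i(x) − ξ_i| ≤ β(E(x)) · |x_i − ξ_i| for every i, where T is the Weierstrass iteration function and β(t) = (1 + t/(n−1)^{1/p})^{n−1} − 1. -/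

import Mathlib

open Finset Filter Topology
open scoped ENNReal

noncomputable def pnorm {n : ℕ} (p : ℝ≥0∞) (v : Fin n → ℝ) : ℝ :=
  if p = ⊤ then ⨆ i, |v i| else (∑ i, |v i| ^ p.toReal) ^ (1 / p.toReal)

noncomputable def epow (a : ℝ) (p : ℝ≥0∞) : ℝ :=
  if p = ⊤ then 1 else a ^ (1 / p.toReal)

noncomputable def dsep {K : Type*} [NormedField K] {n : ℕ} (x : Fin n → K) (i : Fin n) : ℝ :=
  sInf {r : ℝ | ∃ j, j ≠ i ∧ r = ‖x i - x j‖}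

noncomputable def Wcorr {K : Type*} [NormedField K] {n : ℕ} (f : Polynomial K)
    (x : Fin n → K) (i : Fin n) : K :=
  Polynomial.eval (x i) f / (f.leadingCoeff * ∏ j ∈ Finset.univ.erase i, (x i - x j))

def IsRootVector {K : Type*} [NormedField K] {n : ℕ} (f : Polynomial K) (ξ : Fin n → K) : Prop :=
  ∀ z : K, Polynomial.eval z f = f.leadingCoeff * ∏ i, (z - ξ i)

section aux
variable {K : Type*} [NormedField K] {n : ℕ} {ι : Type*}

lemma dsep_finite (x : Fin n → K) (i : Fin n) :
    {r : ℝ | ∃ j, j ≠ i ∧ r = ‖x i - x j‖}.Finite := by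
  have : {r : ℝ | ∃ j, j ≠ i ∧ r = ‖x i - x j‖} = (fun j => ‖x i - x j‖) '' {j | j ≠ i} := by
    ext r; constructor
    · rintro ⟨j, hj, rfl⟩; exact ⟨j, hj, rfl⟩
    · rintro ⟨j, hj, rfl⟩; exact ⟨j, hj, rfl⟩
  rw [this]; exact (Set.toFinite _).image _

lemma dsep_nonempty (hn : 2 ≤ n) (x : Fin n → K) (i : Fin n) :
    {r : ℝ | ∃ j, j ≠ i ∧ r = ‖x i - x j‖}.Nonempty := by
  have : 1 < Fintype.card (Fin n) := by simp; omega
  obtain ⟨j, hj⟩ := Fintype.exists_ne_of_one_lt_card this i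
  exact ⟨‖x i - x j‖, j, hj, rfl⟩

lemma dsep_le (hn : 2 ≤ n) (x : Fin n → K) {i j : Fin n} (h : j ≠ i) :
    dsep x i ≤ ‖x i - x j‖ :=
  csInf_le ((dsep_finite x i).bddBelow) ⟨j, h, rfl⟩

lemma dsep_pos (hn : 2 ≤ n) {x : Fin n → K} (hx : Function.Injective x) (i : Fin n) :
    0 < dsep x i := by
  obtain ⟨j, hj, hr⟩ := (dsep_nonempty hn x i).csInf_mem (dsep_finite x i)
  rw [dsep, hr, norm_pos_iff, sub_ne_zero]
  exact fun e => hj (hx e.symm)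

lemma le_dsep (hn : 2 ≤ n) (x : Fin n → K) (i : Fin n) {c : ℝ}
    (h : ∀ j, j ≠ i → c ≤ ‖x i - x j‖) : c ≤ dsep x i := by
  apply le_csInf (dsep_nonempty hn x i)
  rintro r ⟨j, hj, rfl⟩; exact h j hj

lemma norm_prod_one_add_sub_one_le (s : Finset ι) (a : ι → K) :
    ‖(∏ j ∈ s, (1 + a j)) - 1‖ ≤ (∏ j ∈ s, (1 + ‖a j‖)) - 1 := by
  classical
  induction s using Finset.induction_on with
  | empty => simp
  | @insert i s hi ih =>
    rw [Finset.prod_insert hi, Finset.prod_insert hi]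
    have hQ : ‖∏ j ∈ s, (1 + a j)‖ ≤ ∏ j ∈ s, (1 + ‖a j‖) := by
      rw [norm_prod]
      apply Finset.prod_le_prod (fun j _ => norm_nonneg _)
      intro j _
      calc ‖1 + a j‖ ≤ ‖(1:K)‖ + ‖a j‖ := norm_add_le _ _
        _ = 1 + ‖a j‖ := by rw [norm_one]
    have key : (1 + a i) * ∏ j ∈ s, (1 + a j) - 1
        = ((∏ j ∈ s, (1 + a j)) - 1) + a i * ∏ j ∈ s, (1 + a j) := by ring
    rw [key]
    calc ‖((∏ j ∈ s, (1 + a j)) - 1) + a i * ∏ j ∈ s, (1 + a j)‖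
        ≤ ‖(∏ j ∈ s, (1 + a j)) - 1‖ + ‖a i‖ * ‖∏ j ∈ s, (1 + a j)‖ := by
          rw [← norm_mul]; exact norm_add_le _ _
      _ ≤ ((∏ j ∈ s, (1 + ‖a j‖)) - 1) + ‖a i‖ * ∏ j ∈ s, (1 + ‖a j‖) := by
          exact add_le_add ih (mul_le_mul_of_nonneg_left hQ (norm_nonneg _))
      _ = (1 + ‖a i‖) * ∏ j ∈ s, (1 + ‖a j‖) - 1 := by ring

lemma pnorm_nonneg (hn : 0 < n) (p : ℝ≥0∞) (v : Fin n → ℝ) : 0 ≤ pnorm p v := by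
  rw [pnorm]
  split
  · have : Nonempty (Fin n) := ⟨⟨0, hn⟩⟩
    exact Real.iSup_nonneg (fun i => abs_nonneg _)
  · apply Real.rpow_nonneg
    exact Finset.sum_nonneg fun i _ => Real.rpow_nonneg (abs_nonneg _) _

lemma abs_le_pnorm (hn : 0 < n) {p : ℝ≥0∞} (hp : 1 ≤ p) (v : Fin n → ℝ) (i : Fin n) :
    |v i| ≤ pnorm p v := by
  have : Nonempty (Fin n) := ⟨⟨0, hn⟩⟩
  rw [pnorm]
  split
  · exact le_ciSup (f := fun j => |v j|) (Set.finite_range _).bddAbove i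
  · rename_i hptop
    have hpt : 1 ≤ p.toReal := by
      simpa using ENNReal.toReal_mono hptop hp
    have hpt0 : p.toReal ≠ 0 := by linarith
    have h1 : |v i| ^ p.toReal ≤ ∑ j, |v j| ^ p.toReal :=
      Finset.single_le_sum (fun j _ => Real.rpow_nonneg (abs_nonneg _) _) (Finset.mem_univ i)
    calc |v i| = (|v i| ^ p.toReal) ^ (1 / p.toReal) := by
          rw [← Real.rpow_mul (abs_nonneg _), mul_one_div_cancel hpt0, Real.rpow_one]
      _ ≤ (∑ j, |v j| ^ p.toReal) ^ (1 / p.toReal) := by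
          apply Real.rpow_le_rpow (Real.rpow_nonneg (abs_nonneg _) _) h1
          positivity

lemma pnorm_le_mul (hn : 0 < n) {p : ℝ≥0∞} (hp : 1 ≤ p) {u w : Fin n → ℝ} {c : ℝ}
    (hc : 0 ≤ c) (h : ∀ i, |u i| ≤ c * |w i|) : pnorm p u ≤ c * pnorm p w := by
  have : Nonempty (Fin n) := ⟨⟨0, hn⟩⟩
  rw [pnorm, pnorm]
  split
  · apply ciSup_le; intro i
    calc |u i| ≤ c * |w i| := h i
      _ ≤ c * ⨆ j, |w j| := mul_le_mul_of_nonneg_left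
          (le_ciSup (f := fun j => |w j|) (Set.finite_range _).bddAbove i) hc
  · rename_i hptop
    have hpt : 1 ≤ p.toReal := by simpa using ENNReal.toReal_mono hptop hp
    have hpt0 : p.toReal ≠ 0 := by linarith
    have hw0 : (0:ℝ) ≤ ∑ i, |w i| ^ p.toReal :=
      Finset.sum_nonneg fun i _ => Real.rpow_nonneg (abs_nonneg _) _
    have hsum : ∑ i, |u i| ^ p.toReal ≤ c ^ p.toReal * ∑ i, |w i| ^ p.toReal := by
      rw [Finset.mul_sum]
      apply Finset.sum_le_sum; intro i _
      calc |u i| ^ p.toReal ≤ (c * |w i|) ^ p.toReal :=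
            Real.rpow_le_rpow (abs_nonneg _) (h i) (by linarith)
        _ = c ^ p.toReal * |w i| ^ p.toReal := Real.mul_rpow hc (abs_nonneg _)
    calc (∑ i, |u i| ^ p.toReal) ^ (1/p.toReal)
        ≤ (c ^ p.toReal * ∑ i, |w i| ^ p.toReal) ^ (1/p.toReal) :=
          Real.rpow_le_rpow (Finset.sum_nonneg fun i _ => Real.rpow_nonneg (abs_nonneg _) _)
            hsum (by positivity)
      _ = c * (∑ i, |w i| ^ p.toReal) ^ (1/p.toReal) := by
          rw [Real.mul_rpow (Real.rpow_nonneg hc _) hw0,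
            ← Real.rpow_mul hc, mul_one_div_cancel hpt0, Real.rpow_one]

lemma sum_div_card_le (s : Finset ι) (hs : s.Nonempty) (z : ι → ℝ)
    (hz : ∀ i ∈ s, 0 ≤ z i) {pt : ℝ} (hpt : 1 ≤ pt) :
    (∑ i ∈ s, z i) / s.card ≤ ((∑ i ∈ s, z i ^ pt) / s.card) ^ (1/pt) := by
  have hm : (0:ℝ) < s.card := by exact_mod_cast Finset.card_pos.2 hs
  have h := Real.arith_mean_le_rpow_mean s (fun _ => 1/(s.card:ℝ)) z
    (fun i _ => by positivity) (by rw [Finset.sum_const, nsmul_eq_mul]; field_simp) hz hpt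
  have h1 : ∑ i ∈ s, (1/(s.card:ℝ)) * z i = (∑ i ∈ s, z i) / s.card := by
    rw [← Finset.mul_sum, one_div_mul_eq_div]
  have h2 : ∑ i ∈ s, (1/(s.card:ℝ)) * z i ^ pt = (∑ i ∈ s, z i ^ pt) / s.card := by
    rw [← Finset.mul_sum, one_div_mul_eq_div]
  rwa [h1, h2] at h

lemma amgm_prod (s : Finset ι) (hs : s.Nonempty) (z : ι → ℝ) (hz : ∀ i ∈ s, 0 ≤ z i) :
    ∏ i ∈ s, z i ≤ ((∑ i ∈ s, z i) / s.card) ^ s.card := by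
  have hm : (0:ℝ) < s.card := by exact_mod_cast Finset.card_pos.2 hs
  have hm0 : (s.card:ℝ) ≠ 0 := ne_of_gt hm
  have hg := Real.geom_mean_le_arith_mean_weighted s (fun _ => 1/(s.card:ℝ)) z
    (fun i _ => by positivity) (by rw [Finset.sum_const, nsmul_eq_mul]; field_simp) hz
  have h2 : ∑ i ∈ s, (1/(s.card:ℝ)) * z i = (∑ i ∈ s, z i) / s.card := by
    rw [← Finset.mul_sum, one_div_mul_eq_div]
  rw [h2] at hg
  have h3 : ∏ i ∈ s, z i = (∏ i ∈ s, z i ^ (1/(s.card:ℝ))) ^ s.card := by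
    rw [← Finset.prod_pow]
    apply Finset.prod_congr rfl
    intro i hi
    rw [← Real.rpow_natCast (z i ^ (1/(s.card:ℝ))), ← Real.rpow_mul (hz i hi),
      one_div_mul_cancel hm0, Real.rpow_one]
  rw [h3]
  exact pow_le_pow_left₀ (Finset.prod_nonneg fun i hi => Real.rpow_nonneg (hz i hi) _) hg _

lemma epow_two_conj {p q : ℝ≥0∞} (hp : 1 ≤ p) (hpq : 1/p + 1/q = 1) (hptop : p ≠ ⊤) :
    epow 2 q = 2 ^ (1 - 1/p.toReal) := by
  have hp0 : p ≠ 0 := by intro h; rw [h] at hp; simp at hp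
  by_cases hq : q = ⊤
  · rw [hq] at hpq
    simp only [one_div, ENNReal.inv_top, add_zero] at hpq
    have hp1 : p = 1 := by rwa [ENNReal.inv_eq_one] at hpq
    rw [epow, if_pos hq, hp1]
    norm_num
  · have hq0 : q ≠ 0 := by
      intro h; rw [h] at hpq; simp at hpq
    have h1p : 1/p ≠ ⊤ := by simp [one_div, hp0]
    have h1q : 1/q ≠ ⊤ := by simp [one_div, hq0]
    have hto := congrArg ENNReal.toReal hpq
    rw [ENNReal.toReal_add h1p h1q] at hto
    simp only [one_div, ENNReal.toReal_inv, ENNReal.toReal_one] at hto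
    rw [epow, if_neg hq]
    congr 1
    rw [one_div, one_div]
    linarith

end aux

set_option maxHeartbeats 1600000 in
/-- second-kind contraction lemma. If `x` has pairwise distinct components
and `ψ(E(x)) > 0` where `E(x) = ‖(x−ξ)/d(x)‖_p`, then `ξ` has pairwise distinct
components, `Tx` has pairwise distinct components, `E(Tx) ≤ E(x)β(E(x))/ψ(E(x))` and
`|T_i(x) − ξ_i| ≤ β(E(x))|x_i − ξ_i|`. -/
theorem weierstrass_second_kind_contraction
    {K : Type*} [NormedField K] {n : ℕ} (hn : 2 ≤ n)
    (f : Polynomial K) (hdeg : f.natDegree = n)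
    (ξ : Fin n → K) (hroot : IsRootVector f ξ)
    (p q : ℝ≥0∞) (hp : 1 ≤ p) (hpq : 1 / p + 1 / q = 1)
    (E : (Fin n → K) → ℝ)
    (hE : ∀ y : Fin n → K, E y = pnorm p (fun i => ‖y i - ξ i‖ / dsep y i))
    (ψ β : ℝ → ℝ)
    (hψ : ∀ t : ℝ, ψ t = 1 - epow 2 q * t * (1 + t / epow ((n : ℝ) - 1) p) ^ (n - 1))
    (hβ : ∀ t : ℝ, β t = (1 + t / epow ((n : ℝ) - 1) p) ^ (n - 1) - 1)
    (x : Fin n → K) (hx : Function.Injective x) (hψx : 0 < ψ (E x)) :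
    Function.Injective ξ ∧
    Function.Injective (fun i => x i - Wcorr f x i) ∧
    E (fun i => x i - Wcorr f x i) ≤ E x * β (E x) / ψ (E x) ∧
    ∀ i : Fin n, ‖(x i - Wcorr f x i) - ξ i‖ ≤ β (E x) * ‖x i - ξ i‖ := by
  classical
  have hnpos : 0 < n := by omega
  have hNE : Nonempty (Fin n) := ⟨⟨0, hnpos⟩⟩
  have hf0 : f ≠ 0 := by intro h; rw [h] at hdeg; simp at hdeg; omega
  have ha0 : f.leadingCoeff ≠ 0 := Polynomial.leadingCoeff_ne_zero.mpr hf0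
  have hxij : ∀ {i j : Fin n}, j ≠ i → x i - x j ≠ 0 := fun {i j} h =>
    sub_ne_zero.mpr (fun e => h (hx e.symm))
  set Ei : Fin n → ℝ := fun i => ‖x i - ξ i‖ / dsep x i with hEidef
  set t := E x with htdef
  have htEq : t = pnorm p Ei := hE x
  have hd : ∀ i, 0 < dsep x i := dsep_pos hn hx
  have hEi0 : ∀ i, 0 ≤ Ei i := fun i => div_nonneg (norm_nonneg _) (hd i).le
  have hxξ : ∀ i, ‖x i - ξ i‖ = Ei i * dsep x i := fun i =>
    (div_mul_cancel₀ _ (hd i).ne').symm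
  have ht0 : 0 ≤ t := htEq ▸ pnorm_nonneg hnpos p Ei
  have habs : ∀ i, |Ei i| = Ei i := fun i => abs_of_nonneg (hEi0 i)
  have hEit : ∀ i, Ei i ≤ t := fun i => by
    rw [htEq, ← habs i]; exact abs_le_pnorm hnpos hp Ei i
  have hcross : ∀ {i j : Fin n}, j ≠ i → ‖x j - ξ j‖ ≤ Ei j * ‖x i - x j‖ := by
    intro i j h
    rw [hxξ j]
    have hle : dsep x j ≤ ‖x i - x j‖ := by
      rw [norm_sub_rev]; exact dsep_le hn x (fun e => h e.symm)
    exact mul_le_mul_of_nonneg_left hle (hEi0 j)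
  set s := epow ((n:ℝ) - 1) p with hsdef
  have hn1 : (1:ℝ) ≤ (n:ℝ) - 1 := by
    have h2 : (2:ℝ) ≤ (n:ℝ) := by exact_mod_cast hn
    linarith
  have hs0 : 0 < s := by
    rw [hsdef, epow]
    split
    · exact one_pos
    · exact Real.rpow_pos_of_pos (by linarith) _
  set B := (1 + t / s) ^ (n - 1) with hBdef
  have hts0 : 0 ≤ t / s := div_nonneg ht0 hs0.le
  have hB1 : 1 ≤ B := one_le_pow₀ (by linarith)
  have hB0 : 0 ≤ B := by linarith
  set r := epow 2 q with hrdef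
  have hr0 : 0 ≤ r := by
    rw [hrdef, epow]; split
    · norm_num
    · positivity
  have hψt : ψ t = 1 - r * t * B := hψ t
  have hβt : β t = B - 1 := hβ t
  have hβ0 : 0 ≤ β t := by rw [hβt]; linarith
  have hψpos : 0 < ψ t := hψx
  have hrtB : r * t * B < 1 := by rw [hψt] at hψpos; linarith
  -- the two key inequalities
  have hcard : ∀ i : Fin n, (univ.erase i).card = n - 1 := fun i => by
    rw [card_erase_of_mem (mem_univ i), card_univ, Fintype.card_fin]
  have herasene : ∀ i : Fin n, (univ.erase i).Nonempty := fun i => by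
    rw [← Finset.card_pos, hcard]; omega
  obtain ⟨H2, Hn⟩ : (∀ i j : Fin n, j ≠ i → Ei i + Ei j ≤ r * t) ∧
      (∀ i : Fin n, ∏ j ∈ univ.erase i, (1 + Ei j) ≤ B) := by
    by_cases hptop : p = ⊤
    · -- p = ⊤
      have hq1 : q = 1 := by
        rw [hptop] at hpq
        simp only [one_div, ENNReal.inv_top, zero_add] at hpq
        rwa [ENNReal.inv_eq_one] at hpq
      have hr2 : r = 2 := by
        rw [hrdef, hq1, epow, if_neg (by simp)]
        norm_num
      have hs1 : s = 1 := by rw [hsdef, epow, if_pos hptop]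
      constructor
      · intro i j hij
        rw [hr2, two_mul]
        exact add_le_add (hEit i) (hEit j)
      · intro i
        calc ∏ j ∈ univ.erase i, (1 + Ei j) ≤ ∏ _j ∈ univ.erase i, (1 + t) :=
              Finset.prod_le_prod (fun j _ => by linarith [hEi0 j]) (fun j _ => by linarith [hEit j])
          _ = (1 + t) ^ (n - 1) := by rw [Finset.prod_const, hcard]
          _ = B := by rw [hBdef, hs1, div_one]
    · -- p ≠ ⊤
      have hpt : 1 ≤ p.toReal := by simpa using ENNReal.toReal_mono hptop hp
      have hpt0 : p.toReal ≠ 0 := by linarith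
      have hsum0 : (0:ℝ) ≤ ∑ k, Ei k ^ p.toReal :=
        Finset.sum_nonneg fun k _ => Real.rpow_nonneg (hEi0 k) _
      have htp : t ^ p.toReal = ∑ k, Ei k ^ p.toReal := by
        have hrepr : t = (∑ k, Ei k ^ p.toReal) ^ (1/p.toReal) := by
          rw [htEq, pnorm, if_neg hptop]
          congr 1
          exact Finset.sum_congr rfl fun k _ => by rw [habs k]
        rw [hrepr, ← Real.rpow_mul hsum0, one_div_mul_cancel hpt0, Real.rpow_one]
      have hsub : ∀ (sS : Finset (Fin n)), ∑ k ∈ sS, Ei k ^ p.toReal ≤ t ^ p.toReal := by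
        intro sS
        rw [htp]
        exact Finset.sum_le_sum_of_subset_of_nonneg (Finset.subset_univ _)
          (fun k _ _ => Real.rpow_nonneg (hEi0 k) _)
      constructor
      · intro i j hij
        have hijne : i ≠ j := fun e => hij e.symm
        have hpair : Ei i ^ p.toReal + Ei j ^ p.toReal ≤ t ^ p.toReal := by
          have h := hsub {i, j}
          rwa [Finset.sum_pair hijne] at h
        have hpm : (Ei i + Ei j) / 2
            ≤ ((Ei i ^ p.toReal + Ei j ^ p.toReal) / 2) ^ (1/p.toReal) := by
          have h := sum_div_card_le ({i, j} : Finset (Fin n)) ⟨i, by simp⟩ Ei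
            (fun k _ => hEi0 k) hpt
          simpa [Finset.sum_pair hijne, Finset.card_pair hijne] using h
        have hmid : ((Ei i ^ p.toReal + Ei j ^ p.toReal) / 2) ^ (1/p.toReal)
            ≤ (t ^ p.toReal / 2) ^ (1/p.toReal) := by
          apply Real.rpow_le_rpow _ _ (by positivity)
          · exact div_nonneg (add_nonneg (Real.rpow_nonneg (hEi0 i) _)
              (Real.rpow_nonneg (hEi0 j) _)) (by norm_num)
          · linarith
        have heqr : (t ^ p.toReal / 2) ^ (1/p.toReal) = t / 2 ^ (1/p.toReal) := by
          rw [Real.div_rpow (by positivity) (by norm_num), ← Real.rpow_mul ht0,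
            mul_one_div_cancel hpt0, Real.rpow_one]
        have hrval : r = 2 ^ (1 - 1/p.toReal) := by
          rw [hrdef]; exact epow_two_conj hp hpq hptop
        have h2pos : (0:ℝ) < 2 ^ (1/p.toReal) := Real.rpow_pos_of_pos (by norm_num) _
        have hfin : r * t = 2 * (t / 2 ^ (1/p.toReal)) := by
          rw [hrval, Real.rpow_sub (by norm_num), Real.rpow_one]
          field_simp
        have hchain := hpm.trans (hmid.trans_eq heqr)
        rw [hfin]; linarith
      · intro i
        have hcardm : (((univ.erase i).card : ℕ) : ℝ) = (n:ℝ) - 1 := by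
          rw [hcard i, Nat.cast_sub (by omega : 1 ≤ n), Nat.cast_one]
        have hmne := herasene i
        have hmpos : (0:ℝ) < (univ.erase i).card := by rw [hcardm]; linarith
        have hsumnn : 0 ≤ ∑ j ∈ univ.erase i, Ei j :=
          Finset.sum_nonneg fun j _ => hEi0 j
        have step1 : ∏ j ∈ univ.erase i, (1 + Ei j)
            ≤ ((∑ j ∈ univ.erase i, (1 + Ei j)) / (univ.erase i).card) ^ (univ.erase i).card :=
          amgm_prod _ hmne _ (fun j _ => by linarith [hEi0 j])
        have hsumsplit : (∑ j ∈ univ.erase i, (1 + Ei j)) / ((univ.erase i).card : ℝ)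
            = 1 + (∑ j ∈ univ.erase i, Ei j) / (univ.erase i).card := by
          rw [Finset.sum_add_distrib, Finset.sum_const, nsmul_eq_mul, mul_one, add_div,
            div_self (ne_of_gt hmpos)]
        have step3 : (∑ j ∈ univ.erase i, Ei j) / ((univ.erase i).card : ℝ) ≤ t / s := by
          have ha := sum_div_card_le _ hmne Ei (fun k _ => hEi0 k) hpt
          have hb : ((∑ j ∈ univ.erase i, Ei j ^ p.toReal) / ((univ.erase i).card : ℝ))
                ^ (1/p.toReal)
              ≤ (t ^ p.toReal / ((univ.erase i).card : ℝ)) ^ (1/p.toReal) := by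
            apply Real.rpow_le_rpow _ _ (by positivity)
            · exact div_nonneg (Finset.sum_nonneg fun k _ => Real.rpow_nonneg (hEi0 k) _)
                hmpos.le
            · exact (div_le_div_iff_of_pos_right hmpos).mpr (hsub _)
          have hc : (t ^ p.toReal / ((univ.erase i).card : ℝ)) ^ (1/p.toReal) = t / s := by
            rw [Real.div_rpow (by positivity) hmpos.le, ← Real.rpow_mul ht0,
              mul_one_div_cancel hpt0, Real.rpow_one, hsdef, epow, if_neg hptop, hcardm]
          calc (∑ j ∈ univ.erase i, Ei j) / ((univ.erase i).card : ℝ)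
              ≤ ((∑ j ∈ univ.erase i, Ei j ^ p.toReal) / ((univ.erase i).card : ℝ))
                ^ (1/p.toReal) := ha
            _ ≤ (t ^ p.toReal / ((univ.erase i).card : ℝ)) ^ (1/p.toReal) := hb
            _ = t / s := hc
        have hdivnn : 0 ≤ (∑ j ∈ univ.erase i, Ei j) / ((univ.erase i).card : ℝ) :=
          div_nonneg hsumnn hmpos.le
        calc ∏ j ∈ univ.erase i, (1 + Ei j)
            ≤ ((∑ j ∈ univ.erase i, (1 + Ei j)) / (univ.erase i).card) ^ (univ.erase i).card :=
              step1
          _ = (1 + (∑ j ∈ univ.erase i, Ei j) / ((univ.erase i).card : ℝ))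
                ^ (univ.erase i).card := by rw [hsumsplit]
          _ ≤ (1 + t / s) ^ (univ.erase i).card :=
              pow_le_pow_left₀ (by linarith) (by linarith) _
          _ = B := by rw [hBdef, hcard i]
  -- Weierstrass correction formula
  have hDne : ∀ i, (∏ j ∈ univ.erase i, (x i - x j)) ≠ 0 := fun i =>
    Finset.prod_ne_zero_iff.mpr (fun j hj => hxij (Finset.ne_of_mem_erase hj))
  have hW : ∀ i, Wcorr f x i
      = (x i - ξ i) * ∏ j ∈ univ.erase i, ((x i - ξ j) / (x i - x j)) := by
    intro i
    rw [Wcorr, hroot (x i), ← Finset.mul_prod_erase univ _ (mem_univ i),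
      Finset.prod_div_distrib, mul_div_mul_left _ _ ha0, mul_div_assoc]
  have hfac : ∀ i j : Fin n, j ≠ i →
      (x i - ξ j) / (x i - x j) = 1 + (x j - ξ j) / (x i - x j) := by
    intro i j h
    have heq : (1 : K) + (x j - ξ j) / (x i - x j)
        = ((x i - x j) + (x j - ξ j)) / (x i - x j) := by
      rw [add_div, div_self (hxij h)]
    rw [heq]
    congr 1
    ring
  have hanorm : ∀ i j : Fin n, j ≠ i → ‖(x j - ξ j) / (x i - x j)‖ ≤ Ei j := by
    intro i j h
    rw [norm_div, div_le_iff₀ (norm_pos_iff.mpr (hxij h))]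
    exact hcross h
  have hgB : ∀ i, ‖∏ j ∈ univ.erase i, ((x i - ξ j) / (x i - x j))‖ ≤ B := by
    intro i
    rw [norm_prod]
    calc ∏ j ∈ univ.erase i, ‖(x i - ξ j) / (x i - x j)‖
        ≤ ∏ j ∈ univ.erase i, (1 + Ei j) := by
          apply Finset.prod_le_prod (fun j _ => norm_nonneg _)
          intro j hj
          rw [hfac i j (Finset.ne_of_mem_erase hj)]
          calc ‖1 + (x j - ξ j) / (x i - x j)‖ ≤ ‖(1:K)‖ + ‖(x j - ξ j) / (x i - x j)‖ :=
                norm_add_le _ _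
            _ ≤ 1 + Ei j := by
                rw [norm_one]
                linarith [hanorm i j (Finset.ne_of_mem_erase hj)]
      _ ≤ B := Hn i
  have hg1 : ∀ i, ‖1 - ∏ j ∈ univ.erase i, ((x i - ξ j) / (x i - x j))‖ ≤ B - 1 := by
    intro i
    rw [norm_sub_rev]
    have heq : ∏ j ∈ univ.erase i, ((x i - ξ j) / (x i - x j))
        = ∏ j ∈ univ.erase i, (1 + (x j - ξ j) / (x i - x j)) :=
      Finset.prod_congr rfl fun j hj => hfac i j (Finset.ne_of_mem_erase hj)
    rw [heq]
    calc ‖(∏ j ∈ univ.erase i, (1 + (x j - ξ j) / (x i - x j))) - 1‖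
        ≤ (∏ j ∈ univ.erase i, (1 + ‖(x j - ξ j) / (x i - x j)‖)) - 1 :=
          norm_prod_one_add_sub_one_le _ _
      _ ≤ (∏ j ∈ univ.erase i, (1 + Ei j)) - 1 := by
          apply sub_le_sub_right
          apply Finset.prod_le_prod (fun j _ => by positivity)
          intro j hj
          linarith [hanorm i j (Finset.ne_of_mem_erase hj)]
      _ ≤ B - 1 := sub_le_sub_right (Hn i) 1
  have hT : ∀ i, (x i - Wcorr f x i) - ξ i
      = (x i - ξ i) * (1 - ∏ j ∈ univ.erase i, ((x i - ξ j) / (x i - x j))) := by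
    intro i; rw [hW i]; ring
  have P4 : ∀ i, ‖(x i - Wcorr f x i) - ξ i‖ ≤ β t * ‖x i - ξ i‖ := by
    intro i
    rw [hT i, norm_mul, hβt, mul_comm (‖x i - ξ i‖)]
    exact mul_le_mul_of_nonneg_right (hg1 i) (norm_nonneg _)
  have hWnorm : ∀ i, ‖Wcorr f x i‖ ≤ Ei i * dsep x i * B := by
    intro i
    rw [hW i, norm_mul, hxξ i]
    exact mul_le_mul_of_nonneg_left (hgB i) (mul_nonneg (hEi0 i) (hd i).le)
  have hsep : ∀ i j : Fin n, j ≠ i →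
      ψ t * ‖x i - x j‖ ≤ ‖(x i - Wcorr f x i) - (x j - Wcorr f x j)‖ := by
    intro i j hij
    have hxijpos : 0 < ‖x i - x j‖ := norm_pos_iff.mpr (hxij hij)
    have key : (x i - Wcorr f x i) - (x j - Wcorr f x j)
        = (x i - x j) + (-(Wcorr f x i) + Wcorr f x j) := by ring
    have hA : ∀ u v : K, ‖u‖ - ‖v‖ ≤ ‖u + v‖ := by
      intro u v
      have h1 : ‖u‖ ≤ ‖u + v‖ + ‖v‖ := by
        calc ‖u‖ = ‖(u + v) + (-v)‖ := by ring_nf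
          _ ≤ ‖u + v‖ + ‖-v‖ := norm_add_le _ _
          _ = ‖u + v‖ + ‖v‖ := by rw [norm_neg]
      linarith
    have h2 : ‖-(Wcorr f x i) + Wcorr f x j‖ ≤ ‖Wcorr f x i‖ + ‖Wcorr f x j‖ := by
      calc ‖-(Wcorr f x i) + Wcorr f x j‖ ≤ ‖-(Wcorr f x i)‖ + ‖Wcorr f x j‖ := norm_add_le _ _
        _ = ‖Wcorr f x i‖ + ‖Wcorr f x j‖ := by rw [norm_neg]
    have hdij : dsep x i ≤ ‖x i - x j‖ := dsep_le hn x hij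
    have hdji : dsep x j ≤ ‖x i - x j‖ := by
      rw [norm_sub_rev]; exact dsep_le hn x (fun e => hij e.symm)
    have hWi : ‖Wcorr f x i‖ ≤ Ei i * ‖x i - x j‖ * B := by
      calc ‖Wcorr f x i‖ ≤ Ei i * dsep x i * B := hWnorm i
        _ ≤ Ei i * ‖x i - x j‖ * B := by
            apply mul_le_mul_of_nonneg_right _ hB0
            exact mul_le_mul_of_nonneg_left hdij (hEi0 i)
    have hWj : ‖Wcorr f x j‖ ≤ Ei j * ‖x i - x j‖ * B := by
      calc ‖Wcorr f x j‖ ≤ Ei j * dsep x j * B := hWnorm j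
        _ ≤ Ei j * ‖x i - x j‖ * B := by
            apply mul_le_mul_of_nonneg_right _ hB0
            exact mul_le_mul_of_nonneg_left hdji (hEi0 j)
    have hsum : Ei i * ‖x i - x j‖ * B + Ei j * ‖x i - x j‖ * B
        ≤ r * t * B * ‖x i - x j‖ := by
      have h3 : (Ei i + Ei j) * B ≤ r * t * B := mul_le_mul_of_nonneg_right (H2 i j hij) hB0
      have h4 := mul_le_mul_of_nonneg_right h3 hxijpos.le
      calc Ei i * ‖x i - x j‖ * B + Ei j * ‖x i - x j‖ * B
          = (Ei i + Ei j) * B * ‖x i - x j‖ := by ring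
        _ ≤ r * t * B * ‖x i - x j‖ := h4
    calc ψ t * ‖x i - x j‖ = (1 - r * t * B) * ‖x i - x j‖ := by rw [hψt]
      _ ≤ ‖x i - x j‖ - (‖Wcorr f x i‖ + ‖Wcorr f x j‖) := by
          have hexp : (1 - r * t * B) * ‖x i - x j‖
              = ‖x i - x j‖ - r * t * B * ‖x i - x j‖ := by ring
          rw [hexp]
          linarith [hWi, hWj, hsum]
      _ ≤ ‖x i - x j‖ - ‖-(Wcorr f x i) + Wcorr f x j‖ := by linarith
      _ ≤ ‖(x i - x j) + (-(Wcorr f x i) + Wcorr f x j)‖ := hA _ _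
      _ = ‖(x i - Wcorr f x i) - (x j - Wcorr f x j)‖ := by rw [← key]
  have hrt1 : r * t < 1 := by
    have hrt0 : 0 ≤ r * t := mul_nonneg hr0 ht0
    have h := mul_le_mul_of_nonneg_left hB1 hrt0
    rw [mul_one] at h
    linarith
  -- Part 1 : ξ injective
  have P1 : Function.Injective ξ := by
    intro i j hξij
    by_contra hne
    have hij : j ≠ i := fun e => hne e.symm
    have hxijpos : 0 < ‖x i - x j‖ := norm_pos_iff.mpr (hxij hij)
    have hdij : dsep x i ≤ ‖x i - x j‖ := dsep_le hn x hij
    have hdji : dsep x j ≤ ‖x i - x j‖ := by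
      rw [norm_sub_rev]; exact dsep_le hn x (fun e => hij e.symm)
    have h1 : ‖x i - x j‖ ≤ ‖x i - ξ i‖ + ‖x j - ξ j‖ := by
      calc ‖x i - x j‖ = ‖(x i - ξ i) + (ξ j - x j)‖ := by rw [hξij]; ring_nf
        _ ≤ ‖x i - ξ i‖ + ‖ξ j - x j‖ := norm_add_le _ _
        _ = ‖x i - ξ i‖ + ‖x j - ξ j‖ := by rw [norm_sub_rev (ξ j)]
    have h2 : ‖x i - ξ i‖ ≤ Ei i * ‖x i - x j‖ := by
      rw [hxξ i]; exact mul_le_mul_of_nonneg_left hdij (hEi0 i)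
    have h3 : ‖x j - ξ j‖ ≤ Ei j * ‖x i - x j‖ := by
      rw [hxξ j]; exact mul_le_mul_of_nonneg_left hdji (hEi0 j)
    have h4 : Ei i + Ei j ≤ r * t := H2 i j hij
    have h5 : ‖x i - x j‖ ≤ (r * t) * ‖x i - x j‖ := by
      calc ‖x i - x j‖ ≤ Ei i * ‖x i - x j‖ + Ei j * ‖x i - x j‖ := by linarith
        _ = (Ei i + Ei j) * ‖x i - x j‖ := by ring
        _ ≤ (r * t) * ‖x i - x j‖ := mul_le_mul_of_nonneg_right h4 hxijpos.le
    have h6 : (r * t) * ‖x i - x j‖ < 1 * ‖x i - x j‖ :=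
      mul_lt_mul_of_pos_right hrt1 hxijpos
    rw [one_mul] at h6
    linarith
  -- Part 2 : T injective
  have P2 : Function.Injective (fun i => x i - Wcorr f x i) := by
    intro i j hTij
    by_contra hne
    have hij : j ≠ i := fun e => hne e.symm
    have hxijpos : 0 < ‖x i - x j‖ := norm_pos_iff.mpr (hxij hij)
    have := hsep i j hij
    simp only at hTij
    rw [hTij, sub_self, norm_zero] at this
    have := mul_pos hψpos hxijpos
    linarith
  -- Part 3
  have hdT : ∀ i, ψ t * dsep x i ≤ dsep (fun k => x k - Wcorr f x k) i := by
    intro i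
    apply le_dsep hn _ i
    intro j hj
    calc ψ t * dsep x i ≤ ψ t * ‖x i - x j‖ :=
          mul_le_mul_of_nonneg_left (dsep_le hn x hj) hψpos.le
      _ ≤ ‖(x i - Wcorr f x i) - (x j - Wcorr f x j)‖ := hsep i j hj
  have hdT0 : ∀ i, 0 < dsep (fun k => x k - Wcorr f x k) i := fun i =>
    lt_of_lt_of_le (mul_pos hψpos (hd i)) (hdT i)
  have hβψ0 : 0 ≤ β t / ψ t := div_nonneg hβ0 hψpos.le
  have P3 : E (fun i => x i - Wcorr f x i) ≤ E x * β (E x) / ψ (E x) := by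
    rw [hE (fun i => x i - Wcorr f x i)]
    have final : pnorm p (fun i => ‖(fun k => x k - Wcorr f x k) i - ξ i‖
        / dsep (fun k => x k - Wcorr f x k) i) ≤ (β t / ψ t) * pnorm p Ei := by
      apply pnorm_le_mul hnpos hp hβψ0
      intro i
      rw [abs_of_nonneg (div_nonneg (norm_nonneg _) (hdT0 i).le), habs i]
      calc ‖(x i - Wcorr f x i) - ξ i‖ / dsep (fun k => x k - Wcorr f x k) i
          ≤ (β t * (Ei i * dsep x i)) / (ψ t * dsep x i) := by
            apply div_le_div₀ (mul_nonneg hβ0 (mul_nonneg (hEi0 i) (hd i).le))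
            · rw [← hxξ i]; exact P4 i
            · exact mul_pos hψpos (hd i)
            · exact hdT i
        _ = β t / ψ t * Ei i := by
            have hd' : dsep x i ≠ 0 := (hd i).ne'
            have hψ' : ψ t ≠ 0 := hψpos.ne'
            field_simp
    calc pnorm p (fun i => ‖(fun k => x k - Wcorr f x k) i - ξ i‖
          / dsep (fun k => x k - Wcorr f x k) i) ≤ (β t / ψ t) * pnorm p Ei := final
      _ = t * β t / ψ t := by rw [← htEq]; ring
  exact ⟨P1, P2, P3, P4⟩
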